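/- A metric space Z is a γ_k-set if and only if Z is locally compact and separable. -/

import Mathlib

/-- A `k`-cover: a family of open sets such that every compact set is contained in a member. -/
def IsKCover {Z : Type*} [TopologicalSpace Z] (𝒰 : Set (Set Z)) : Prop :=
  (∀ U ∈ 𝒰, IsOpen U) ∧ ∀ C : Set Z, IsCompact C → ∃ U ∈ 𝒰, C ⊆ U

/-- `Z` is a `γ_k`-set: every `k`-cover admits a sequence `(U_n)` such that every
compact set is contained in all but finitely many `U_n`. -/
def IsGammaKSet (Z : Type*) [TopologicalSpace Z] : Prop :=
  ∀ 𝒰 : Set (Set Z), IsKCover 𝒰 →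
    ∃ U : ℕ → Set Z, (∀ n, U n ∈ 𝒰) ∧
      ∀ C : Set Z, IsCompact C → ∀ᶠ n in Filter.atTop, C ⊆ U n

open Set Filter Metric Topology TopologicalSpace

section Aux
variable {Z : Type*} [MetricSpace Z]

/-- An `ε`-separated set has all its subsets closed. -/
lemma sep_isClosed {ε : ℝ} {A : Set Z}
    (hA : ∀ a ∈ A, ∀ b ∈ A, a ≠ b → ε ≤ dist a b) (hε : 0 < ε) : IsClosed A := by
  refine isClosed_of_closure_subset fun p hp => ?_
  by_contra hpA
  obtain ⟨b₁, hb₁, hd₁⟩ := Metric.mem_closure_iff.1 hp (ε / 2) (by linarith)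
  have hpb₁ : p ≠ b₁ := fun h => hpA (h ▸ hb₁)
  have h0 : 0 < dist p b₁ := dist_pos.2 hpb₁
  obtain ⟨b₂, hb₂, hd₂⟩ := Metric.mem_closure_iff.1 hp (min (dist p b₁) (ε / 2))
    (lt_min h0 (by linarith))
  have hne : b₂ ≠ b₁ := by
    intro h; subst h
    exact absurd (lt_min_iff.1 hd₂).1 (lt_irrefl _)
  have := hA b₁ hb₁ b₂ hb₂ (Ne.symm hne)
  have : dist b₁ b₂ ≤ dist b₁ p + dist p b₂ := dist_triangle _ _ _
  have h1 : dist p b₂ < ε / 2 := (lt_min_iff.1 hd₂).2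
  have h2 : dist b₁ p < ε / 2 := by rwa [dist_comm]
  linarith [hA b₁ hb₁ b₂ hb₂ (Ne.symm hne)]

/-- An `ε`-separated set meets every compact set in a finite set. -/
lemma sep_inter_compact_finite {ε : ℝ} {A C : Set Z}
    (hA : ∀ a ∈ A, ∀ b ∈ A, a ≠ b → ε ≤ dist a b) (hε : 0 < ε)
    (hC : IsCompact C) : (A ∩ C).Finite := by
  obtain ⟨t, htf, hCt⟩ := (totallyBounded_iff.1 hC.totallyBounded) (ε / 2) (by linarith)
  by_contra hinf
  have hinf' : (A ∩ C).Infinite := hinf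
  haveI := hinf'.to_subtype
  haveI := htf.to_subtype
  have hmem : ∀ a : ↥(A ∩ C), ∃ y : t, (a : Z) ∈ ball (y : Z) (ε / 2) := by
    rintro ⟨a, ha, hc⟩
    obtain ⟨y, hy, hmem⟩ := Set.mem_iUnion₂.1 (hCt hc)
    exact ⟨⟨y, hy⟩, hmem⟩
  choose f hf using hmem
  obtain ⟨a, b, hab, hfab⟩ := Finite.exists_ne_map_eq_of_infinite f
  have h1 : dist (a : Z) ((f b : Z)) < ε / 2 := by
    have := mem_ball.1 (hf a); rwa [hfab] at this
  have h2 : dist ((f b : Z)) (b : Z) < ε / 2 := by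
    have := mem_ball.1 (hf b); rwa [dist_comm] at this
  have hne : (a : Z) ≠ (b : Z) := fun h => hab (Subtype.ext h)
  linarith [hA a a.2.1 b b.2.1 hne, dist_triangle (a : Z) ((f b : Z)) (b : Z)]

/-- From a closed non-compact set in a metric space one can extract a sequence whose images
are all closed and which meets every compact set only finitely often. -/
lemma exists_bad_seq {s : Set Z} (hs : IsClosed s) (hnc : ¬ IsCompact s) :
    ∃ x : ℕ → Z, (∀ k, x k ∈ s) ∧ (∀ T : Set ℕ, IsClosed (x '' T)) ∧
      ∀ C : Set Z, IsCompact C → {k | x k ∈ C}.Finite := by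
  have hseq : ¬ IsSeqCompact s := fun h => hnc h.isCompact
  obtain ⟨x, hxs, H⟩ : ∃ x : ℕ → Z, (∀ n, x n ∈ s) ∧
      ∀ p ∈ s, ∀ φ : ℕ → ℕ, StrictMono φ → ¬ Tendsto (x ∘ φ) atTop (𝓝 p) := by
    by_contra hcon
    push_neg at hcon
    exact hseq fun x hx => hcon x hx
  refine ⟨x, hxs, ?_, ?_⟩
  · -- all images are closed
    intro T
    refine isClosed_of_closure_subset fun p hp => ?_
    by_contra hpT
    have freq : ∀ n : ℕ, ∃ᶠ k in atTop, k ∈ T ∧ dist p (x k) < 1 / (n + 1) := by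
      intro n
      rw [frequently_atTop]
      intro N
      have hF : (x '' (T ∩ Iio N)).Finite := ((Set.finite_Iio N).inter_of_right T).image x
      have hpF : p ∉ x '' (T ∩ Iio N) := fun h =>
        hpT (image_mono (f := x) inter_subset_left h)
      obtain ⟨δ₀, hδ₀, hball⟩ := Metric.isOpen_iff.1 hF.isClosed.isOpen_compl p hpF
      have hpos : 0 < min δ₀ (1 / ((n : ℝ) + 1)) := lt_min hδ₀ (by positivity)
      obtain ⟨b, hb, hdb⟩ := Metric.mem_closure_iff.1 hp _ hpos
      obtain ⟨m, hmT, rfl⟩ := hb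
      refine ⟨m, ?_, hmT, (lt_min_iff.1 hdb).2⟩
      by_contra hmN
      push_neg at hmN
      have hmem : x m ∈ x '' (T ∩ Iio N) := ⟨m, ⟨hmT, hmN⟩, rfl⟩
      have : x m ∈ ball p δ₀ := by
        rw [mem_ball, dist_comm]; exact (lt_min_iff.1 hdb).1
      exact hball this hmem
    obtain ⟨φ, hφ, hφP⟩ := Filter.extraction_forall_of_frequently freq
    have htend : Tendsto (x ∘ φ) atTop (𝓝 p) := by
      rw [Metric.tendsto_atTop]
      intro ε hε
      obtain ⟨N, hN⟩ := exists_nat_one_div_lt hε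
      refine ⟨N, fun m hm => ?_⟩
      have h1 : dist p (x (φ m)) < 1 / (m + 1) := (hφP m).2
      have h2 : (1 : ℝ) / (m + 1) ≤ 1 / (N + 1) := by
        apply one_div_le_one_div_of_le (by positivity)
        exact_mod_cast Nat.succ_le_succ hm
      rw [Function.comp_apply, dist_comm]
      linarith
    have hps : p ∈ s := hs.mem_of_tendsto htend (Eventually.of_forall fun k => hxs _)
    exact H p hps φ hφ htend
  · -- traces on compact sets are finite
    intro C hC
    by_contra hinf
    have hinf' : {k | x k ∈ C}.Infinite := hinf
    have hfreq : ∃ᶠ k in atTop, x k ∈ C := by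
      rw [frequently_atTop]
      intro N
      obtain ⟨b, hb, hNb⟩ := hinf'.exists_gt N
      exact ⟨b, hNb.le, hb⟩
    obtain ⟨φ, hφ, hφC⟩ := extraction_of_frequently_atTop hfreq
    obtain ⟨a, haC, ψ, hψ, htend⟩ := hC.tendsto_subseq (x := x ∘ φ) hφC
    have hxs' : Tendsto (x ∘ (φ ∘ ψ)) atTop (𝓝 a) := htend
    have has : a ∈ s := hs.mem_of_tendsto hxs' (Eventually.of_forall fun k => hxs _)
    exact H a has (φ ∘ ψ) (hφ.comp hψ) hxs'

end Aux

section Main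
variable {Z : Type*} [MetricSpace Z]

lemma gammaK_of_lc_sep [LocallyCompactSpace Z] [SeparableSpace Z] : IsGammaKSet Z := by
  haveI : SecondCountableTopology Z := UniformSpace.secondCountable_of_separable Z
  intro 𝒰 h𝒰
  let K := CompactExhaustion.choice Z
  have hch : ∀ n, ∃ U ∈ 𝒰, K n ⊆ U := fun n => h𝒰.2 (K n) (K.isCompact n)
  choose U hU hKU using hch
  refine ⟨U, hU, fun C hC => ?_⟩
  obtain ⟨N, hN⟩ := K.exists_superset_of_isCompact hC
  filter_upwards [eventually_ge_atTop N] with n hn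
  exact (hN.trans (K.subset hn)).trans (hKU n)


lemma separable_of_gammaK (h : IsGammaKSet Z) : SeparableSpace Z := by
  by_contra hns
  have hnet : ¬ ∀ ε > (0:ℝ), ∃ t : Set Z, t.Countable ∧ ∀ x, ∃ y ∈ t, dist x y ≤ ε := by
    intro hd
    haveI := Metric.secondCountable_of_almost_dense_set hd
    exact hns inferInstance
  push_neg at hnet
  obtain ⟨ε, hε, hnoc⟩ := hnet
  have hzorn : ∀ c ⊆ {B : Set Z | ∀ a ∈ B, ∀ b ∈ B, a ≠ b → ε ≤ dist a b},
      IsChain (· ⊆ ·) c → ∃ ub ∈ {B : Set Z | ∀ a ∈ B, ∀ b ∈ B, a ≠ b → ε ≤ dist a b},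
        ∀ s ∈ c, s ⊆ ub := by
    intro c hcS hchain
    refine ⟨⋃₀ c, ?_, fun s hs => subset_sUnion_of_mem hs⟩
    rintro a ⟨sa, hsa, haa⟩ b ⟨sb, hsb, hbb⟩ hab
    rcases hchain.total hsa hsb with hss | hss
    · exact hcS hsb a (hss haa) b hbb hab
    · exact hcS hsa a haa b (hss hbb) hab
  obtain ⟨A, hAmax⟩ := zorn_subset _ hzorn
  have hA : ∀ a ∈ A, ∀ b ∈ A, a ≠ b → ε ≤ dist a b := hAmax.prop
  have hdense : ∀ x, ∃ y ∈ A, dist x y ≤ ε := by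
    intro x
    by_contra hx
    push_neg at hx
    have hxA : x ∉ A := by
      intro hmem
      have : ε < 0 := by simpa [dist_self] using hx x hmem
      linarith
    have hins : (insert x A) ∈ {B : Set Z | ∀ a ∈ B, ∀ b ∈ B, a ≠ b → ε ≤ dist a b} := by
      rintro a (rfl | ha) b (rfl | hb) hab
      · exact absurd rfl hab
      · exact (hx b hb).le
      · rw [dist_comm]; exact (hx a ha).le
      · exact hA a ha b hb hab
    have hxmem : x ∈ A := hAmax.2 hins (subset_insert x A) (mem_insert x A)
    exact hxA hxmem
  have hunc : ¬ A.Countable := by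
    intro hAc
    obtain ⟨x, hx⟩ := hnoc A hAc
    obtain ⟨y, hy, hyd⟩ := hdense x
    exact absurd hyd (not_le.2 (hx y hy))
  have hcov : IsKCover {U : Set Z | IsOpen U ∧ (U ∩ A).Finite} := by
    constructor
    · exact fun U hU => hU.1
    · intro C hC
      refine ⟨(A \ C)ᶜ, ⟨?_, ?_⟩, fun c hc hmem => hmem.2 hc⟩
      · exact (sep_isClosed (fun a ha b hb => hA a ha.1 b hb.1) hε).isOpen_compl
      · refine (sep_inter_compact_finite hA hε hC).subset ?_
        rintro u ⟨hu, huA⟩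
        exact ⟨huA, by_contra fun hc => hu ⟨huA, hc⟩⟩
  obtain ⟨U, hU𝒰, hUev⟩ := h _ hcov
  have hsub : A ⊆ ⋃ m, (U m ∩ A) := by
    intro a ha
    obtain ⟨m, hm⟩ := (hUev {a} isCompact_singleton).exists
    exact mem_iUnion.2 ⟨m, hm rfl, ha⟩
  exact hunc ((countable_iUnion fun m => ((hU𝒰 m).2).countable).mono hsub)

lemma locallyCompact_of_gammaK (h : IsGammaKSet Z) : LocallyCompactSpace Z := by
  by_contra hlc
  have hz : ∃ z : Z, ∀ r : ℝ, 0 < r → ¬ IsCompact (closedBall z r) := by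
    by_contra hz
    push_neg at hz
    apply hlc
    constructor
    intro p n hn
    obtain ⟨r, hr, hrc⟩ := hz p
    obtain ⟨δ, hδ, hδn⟩ := Metric.nhds_basis_closedBall.mem_iff.1 hn
    refine ⟨closedBall p (min δ r), closedBall_mem_nhds p (lt_min hδ hr),
      (closedBall_subset_closedBall (min_le_left _ _)).trans hδn, ?_⟩
    exact hrc.of_isClosed_subset Metric.isClosed_closedBall
      (closedBall_subset_closedBall (min_le_right _ _))
  obtain ⟨z₀, hz₀⟩ := hz
  have hball : ∀ n : ℕ, ¬ IsCompact (closedBall z₀ (1 / (n + 1))) := fun n =>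
    hz₀ _ (by positivity)
  choose x hxmem hxclosed hxtrace using fun n : ℕ =>
    exists_bad_seq (Metric.isClosed_closedBall (x := z₀) (ε := 1 / (n + 1))) (hball n)
  have hcov : IsKCover {U : Set Z | IsOpen U ∧
      ∃ N : ℕ, {k | x 0 k ∈ U}.ncard ≤ N ∧ ∀ n ≤ N, {k | x n k ∈ U}.Finite} := by
    refine ⟨fun U hU => hU.1, fun C hC => ?_⟩
    set N := {k | x 0 k ∈ C}.ncard with hNdef
    have hEc : IsClosed (⋃ n ∈ Set.Iic N, (x n '' {k | x n k ∉ C})) :=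
      (Set.finite_Iic N).isClosed_biUnion (fun n _ => hxclosed n _)
    have htr : ∀ n ≤ N, {k | x n k ∈ (⋃ n ∈ Set.Iic N, (x n '' {k | x n k ∉ C}))ᶜ}
        ⊆ {k | x n k ∈ C} := by
      intro n hn k hk
      by_contra hkC
      exact hk (mem_biUnion (mem_Iic.2 hn) ⟨k, hkC, rfl⟩)
    refine ⟨_ᶜ, ⟨hEc.isOpen_compl, N, ?_, ?_⟩, ?_⟩
    · exact hNdef ▸ Set.ncard_le_ncard (htr 0 (Nat.zero_le N)) (hxtrace 0 C hC)
    · exact fun n hn => (hxtrace n C hC).subset (htr n hn)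
    · intro c hc hcE
      obtain ⟨n, -, hmem⟩ := mem_iUnion₂.1 hcE
      obtain ⟨k', hk', rfl⟩ := hmem
      exact hk' hc
  obtain ⟨U, hU𝒰, hUev⟩ := h _ hcov
  choose N hN1 hN2 using fun m => (hU𝒰 m).2
  have hgrow : ∀ K : ℕ, ∀ᶠ m in atTop, K ≤ N m := by
    intro K
    have hCfin : (x 0 '' Set.Iio K).Finite := (Set.finite_Iio K).image _
    filter_upwards [hUev _ hCfin.isCompact] with m hm
    have hsub : Set.Iio K ⊆ {k | x 0 k ∈ U m} := fun k hk => hm ⟨k, hk, rfl⟩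
    have h1 : (Set.Iio K).ncard ≤ {k | x 0 k ∈ U m}.ncard :=
      Set.ncard_le_ncard hsub (hN2 m 0 (Nat.zero_le _))
    have h2 : (Set.Iio K).ncard = K := by
      rw [← Finset.coe_range, Set.ncard_coe_finset, Finset.card_range]
    exact le_trans (h2 ▸ h1) (hN1 m)
  obtain ⟨φ, hφ, hφN⟩ := Filter.extraction_forall_of_eventually hgrow
  have hy : ∀ i : ℕ, ∃ k, x i k ∉ U (φ i) := by
    intro i
    have hfin : {k | x i k ∈ U (φ i)}.Finite := hN2 (φ i) i (hφN i)
    obtain ⟨k, hk⟩ := hfin.infinite_compl.nonempty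
    exact ⟨k, hk⟩
  choose k hk using hy
  have hyt : Tendsto (fun i => x i (k i)) atTop (𝓝 z₀) := by
    rw [tendsto_iff_dist_tendsto_zero]
    refine squeeze_zero (fun i => dist_nonneg) (fun i => ?_)
      tendsto_one_div_add_atTop_nhds_zero_nat
    exact mem_closedBall.1 (hxmem i (k i))
  obtain ⟨M, hM⟩ := eventually_atTop.1 (hUev _ hyt.isCompact_insert_range)
  exact hk M (hM (φ M) hφ.le_apply (mem_insert_of_mem _ (mem_range_self M)))

end Main

theorem stmt3 {Z : Type*} [MetricSpace Z] :
    IsGammaKSet Z ↔ LocallyCompactSpace Z ∧ TopologicalSpace.SeparableSpace Z := by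
  constructor
  · intro h
    exact ⟨locallyCompact_of_gammaK h, separable_of_gammaK h⟩
  · rintro ⟨h1, h2⟩
    exact gammaK_of_lc_sep
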